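/- arXiv:0806.4785 — 2 statements merged into one kernel-verified Lean document; each statement's English description precedes it below -/
import Mathlib

section
/- The set of double suits over N → A, equipped with 0 = ({∅}, P(P(N → A))), 1 = (P(P(N → A)), {∅}), negation ¬(X⁺, X⁻) = (X⁻, X⁺), join X + Y = (X⁺ ∪ Y⁺, X⁻ ∩ Y⁻), and meet X · Y = (X⁺ ∩ Y⁺, X⁻ ∪ Y⁻), forms a Kleene algebra: a bounded distributive lattice with an involution satisfying De Morgan's laws and the axiom X · ¬X ≤ Y + ¬Y. -/
open Set

/-- A pair of sets of teams (truth coordinate, falsity coordinate). -/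
abbrev DPair (α : Type*) := Set (Set α) × Set (Set α)

/-- A suit: a nonempty, downward-closed collection of teams. -/
def Suit {α : Type*} (X : Set (Set α)) : Prop :=
  X.Nonempty ∧ ∀ V ∈ X, ∀ V' ⊆ V, V' ∈ X

/-- A double suit: a pair of suits intersecting exactly in {∅}. -/
def DoubleSuit {α : Type*} (X : DPair α) : Prop :=
  Suit X.1 ∧ Suit X.2 ∧ X.1 ∩ X.2 = {∅}

def dsZero {α : Type*} : DPair α := ({∅}, Set.univ)
def dsOne {α : Type*} : DPair α := (Set.univ, {∅})
def dsOmega {α : Type*} : DPair α := ({∅}, {∅})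

def dsNeg {α : Type*} (X : DPair α) : DPair α := (X.2, X.1)

/-- `X +_N Y` (J = full index set). -/
def plusN {α : Type*} (X Y : DPair α) : DPair α := (X.1 ∪ Y.1, X.2 ∩ Y.2)

/-- `X ·_N Y` (J = full index set). -/
def dotN {α : Type*} (X Y : DPair α) : DPair α := (X.1 ∩ Y.1, X.2 ∪ Y.2)

/-- `X +_∅ Y`: truth coordinate given by disjoint unions. -/
def plusE {α : Type*} (X Y : DPair α) : DPair α :=
  ({V | ∃ V₁ ∈ X.1, ∃ V₂ ∈ Y.1, V = V₁ ∪ V₂ ∧ V₁ ∩ V₂ = ∅}, X.2 ∩ Y.2)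

/-- `X ·_∅ Y`. -/
def dotE {α : Type*} (X Y : DPair α) : DPair α :=
  (X.1 ∩ Y.1, {W | ∃ W₁ ∈ X.2, ∃ W₂ ∈ Y.2, W = W₁ ∪ W₂ ∧ W₁ ∩ W₂ = ∅})

/-- The partial order `X ≤ Y` iff `X⁺ ⊆ Y⁺` and `Y⁻ ⊆ X⁻`. -/
def leD {α : Type*} (X Y : DPair α) : Prop := X.1 ⊆ Y.1 ∧ Y.2 ⊆ X.2

/-- `a ≈_J b`: valuations agreeing outside `J`. -/
def approxJ {N A : Type*} (J : Set N) (a b : N → A) : Prop := ∀ i ∉ J, a i = b i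

/-- `V = V₁ ∪_J V₂`: a J-saturated disjoint cover of `V`. -/
def unionJ {N A : Type*} (J : Set N) (V V₁ V₂ : Set (N → A)) : Prop :=
  V = V₁ ∪ V₂ ∧ V₁ ∩ V₂ = ∅ ∧
  ∀ a ∈ V, ∀ b ∈ V, approxJ J a b → (a ∈ V₁ → b ∈ V₁) ∧ (a ∈ V₂ → b ∈ V₂)

/-- `X +_J Y`. -/
def plusJ {N A : Type*} (J : Set N) (X Y : DPair (N → A)) : DPair (N → A) :=
  ({V | ∃ V₁ ∈ X.1, ∃ V₂ ∈ Y.1, unionJ J V V₁ V₂}, X.2 ∩ Y.2)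

/-- `X ·_J Y`. -/
def dotJ {N A : Type*} (J : Set N) (X Y : DPair (N → A)) : DPair (N → A) :=
  (X.1 ∩ Y.1, {W | ∃ W₁ ∈ X.2, ∃ W₂ ∈ Y.2, unionJ J W W₁ W₂})

/-- `nsum X n` is the (n+1)-fold sum `X +_∅ ⋯ +_∅ X`. -/
def nsum {α : Type*} (X : DPair α) : ℕ → DPair α
  | 0 => X
  | n + 1 => plusE X (nsum X n)

/-- The order of `X`: the least positive `n` whose `n`-fold `+_∅` sum of `X` is 1
(`⊤` if there is none). -/
noncomputable def ordOf {α : Type*} (X : DPair α) : ℕ∞ :=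
  sInf {m : ℕ∞ | ∃ n : ℕ, m = (n : ℕ∞) + 1 ∧ nsum X n = dsOne}


lemma Suit.empty_mem {α : Type*} {X : Set (Set α)} (h : Suit X) : (∅ : Set α) ∈ X := by
  obtain ⟨⟨V, hV⟩, hdc⟩ := h
  exact hdc V hV ∅ (Set.empty_subset V)

lemma Suit.union {α : Type*} {X Y : Set (Set α)} (hX : Suit X) (hY : Suit Y) :
    Suit (X ∪ Y) := by
  refine ⟨⟨∅, Or.inl hX.empty_mem⟩, ?_⟩
  rintro V (hV | hV) V' hV'
  · exact Or.inl (hX.2 V hV V' hV')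
  · exact Or.inr (hY.2 V hV V' hV')

lemma Suit.inter {α : Type*} {X Y : Set (Set α)} (hX : Suit X) (hY : Suit Y) :
    Suit (X ∩ Y) := by
  refine ⟨⟨∅, hX.empty_mem, hY.empty_mem⟩, ?_⟩
  rintro V ⟨h1, h2⟩ V' hV'
  exact ⟨hX.2 V h1 V' hV', hY.2 V h2 V' hV'⟩

theorem stmt6 {N A : Type*} :
    -- closure of double suits under the operations and constants
    (∀ X Y : DPair (N → A), DoubleSuit X → DoubleSuit Y →
      DoubleSuit (plusN X Y) ∧ DoubleSuit (dotN X Y)) ∧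
    (∀ X : DPair (N → A), DoubleSuit X → DoubleSuit (dsNeg X)) ∧
    DoubleSuit (dsZero : DPair (N → A)) ∧ DoubleSuit (dsOne : DPair (N → A)) ∧
    -- commutativity
    (∀ X Y : DPair (N → A), DoubleSuit X → DoubleSuit Y →
      plusN X Y = plusN Y X ∧ dotN X Y = dotN Y X) ∧
    -- associativity
    (∀ X Y Z : DPair (N → A), DoubleSuit X → DoubleSuit Y → DoubleSuit Z →
      plusN (plusN X Y) Z = plusN X (plusN Y Z) ∧
      dotN (dotN X Y) Z = dotN X (dotN Y Z)) ∧
    -- absorption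
    (∀ X Y : DPair (N → A), DoubleSuit X → DoubleSuit Y →
      plusN X (dotN X Y) = X ∧ dotN X (plusN X Y) = X) ∧
    -- distributivity
    (∀ X Y Z : DPair (N → A), DoubleSuit X → DoubleSuit Y → DoubleSuit Z →
      dotN X (plusN Y Z) = plusN (dotN X Y) (dotN X Z) ∧
      plusN X (dotN Y Z) = dotN (plusN X Y) (plusN X Z)) ∧
    -- bounds
    (∀ X : DPair (N → A), DoubleSuit X →
      plusN X dsZero = X ∧ dotN X dsOne = X ∧
      plusN X dsOne = dsOne ∧ dotN X dsZero = dsZero) ∧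
    -- involution
    (∀ X : DPair (N → A), DoubleSuit X → dsNeg (dsNeg X) = X) ∧
    -- De Morgan
    (∀ X Y : DPair (N → A), DoubleSuit X → DoubleSuit Y →
      dsNeg (plusN X Y) = dotN (dsNeg X) (dsNeg Y)) ∧
    -- Kleene axiom
    (∀ X Y : DPair (N → A), DoubleSuit X → DoubleSuit Y →
      leD (dotN X (dsNeg X)) (plusN Y (dsNeg Y))) := by

  have inter_eq : ∀ X Y : DPair (N → A), DoubleSuit X → DoubleSuit Y →
      (X.1 ∪ Y.1) ∩ (X.2 ∩ Y.2) = {∅} := by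
    rintro X Y ⟨hX1, hX2, hX3⟩ ⟨hY1, hY2, hY3⟩
    apply Set.Subset.antisymm
    · rintro V ⟨(h | h), h2, h3⟩
      · exact hX3 ▸ ⟨h, h2⟩
      · exact hY3 ▸ ⟨h, h3⟩
    · rintro V (rfl : V = ∅)
      exact ⟨Or.inl hX1.empty_mem, hX2.empty_mem, hY2.empty_mem⟩
  have closure : ∀ X Y : DPair (N → A), DoubleSuit X → DoubleSuit Y →
      DoubleSuit (plusN X Y) ∧ DoubleSuit (dotN X Y) := by
    intro X Y hX hY
    constructor
    · exact ⟨hX.1.union hY.1, hX.2.1.inter hY.2.1, inter_eq X Y hX hY⟩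
    · refine ⟨hX.1.inter hY.1, hX.2.1.union hY.2.1, ?_⟩
      have := inter_eq (dsNeg X) (dsNeg Y) ⟨hX.2.1, hX.1, by
        rw [← hX.2.2]; exact Set.inter_comm _ _⟩ ⟨hY.2.1, hY.1, by
        rw [← hY.2.2]; exact Set.inter_comm _ _⟩
      simpa [dsNeg, dotN, Set.inter_comm] using this
  refine ⟨closure, ?_, ?_, ?_, ?_, ?_, ?_, ?_, ?_, ?_, ?_, ?_⟩
  · rintro X ⟨h1, h2, h3⟩
    exact ⟨h2, h1, by rw [← h3]; exact Set.inter_comm _ _⟩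
  · refine ⟨⟨⟨∅, rfl⟩, ?_⟩, ⟨⟨∅, trivial⟩, fun _ _ _ _ => trivial⟩, by simp [dsZero]⟩
    rintro V (rfl : V = ∅) V' hV'
    exact Set.subset_empty_iff.mp hV'
  · refine ⟨⟨⟨∅, trivial⟩, fun _ _ _ _ => trivial⟩, ⟨⟨∅, rfl⟩, ?_⟩, by simp [dsOne]⟩
    rintro V (rfl : V = ∅) V' hV'
    exact Set.subset_empty_iff.mp hV'
  · intro X Y _ _
    constructor <;> simp [plusN, dotN, Set.union_comm, Set.inter_comm]
  · intro X Y Z _ _ _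
    constructor <;> simp [plusN, dotN, Set.union_assoc, Set.inter_assoc]
  · intro X Y _ _
    exact ⟨Prod.ext sup_inf_self inf_sup_self, Prod.ext inf_sup_self sup_inf_self⟩
  · intro X Y Z _ _ _
    exact ⟨Prod.ext (Set.inter_union_distrib_left _ _ _) (Set.union_inter_distrib_left _ _ _),
      Prod.ext (Set.union_inter_distrib_left _ _ _) (Set.inter_union_distrib_left _ _ _)⟩
  · intro X hX
    refine ⟨?_, ?_, ?_, ?_⟩ <;> simp [plusN, dotN, dsZero, dsOne, Prod.ext_iff,
      Set.union_eq_self_of_subset_right, Set.inter_eq_self_of_subset_right,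
      Set.singleton_subset_iff, hX.1.empty_mem, hX.2.1.empty_mem]
  · intro X _; rfl
  · intro X Y _ _; rfl
  · intro X Y hX hY
    constructor
    · rintro V h
      have : V = ∅ := by rw [← Set.mem_singleton_iff, ← hX.2.2]; exact h
      subst this
      exact Or.inl hY.1.empty_mem
    · rintro V ⟨h1, h2⟩
      have : V = ∅ := by rw [← Set.mem_singleton_iff, ← hY.2.2]; exact ⟨h2, h1⟩
      subst this
      exact Or.inl hX.2.1.empty_mem
end

section
/- Let ≅ be a congruence on a double-suited IFG_N-algebra (compatible with +_∅). If X ≅ Y and the order of X (least n with the n-fold +_∅ sum of X equal to 1) is strictly less than the order of Y, then ≅ is the total congruence. -/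
open Set

lemma empty_mem_ds {α : Type*} {X : DPair α} (h : DoubleSuit X) :
    ∅ ∈ X.1 ∧ ∅ ∈ X.2 := by
  have : (∅ : Set α) ∈ X.1 ∩ X.2 := by rw [h.2.2]; rfl
  exact ⟨this.1, this.2⟩

lemma ds_plusE {α : Type*} {X Y : DPair α} (hX : DoubleSuit X) (hY : DoubleSuit Y) :
    DoubleSuit (plusE X Y) := by
  obtain ⟨hX1, hX2, hXi⟩ := hX
  obtain ⟨hY1, hY2, hYi⟩ := hY
  have heX := empty_mem_ds ⟨hX1, hX2, hXi⟩
  have heY := empty_mem_ds ⟨hY1, hY2, hYi⟩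
  refine ⟨⟨⟨∅, ⟨∅, heX.1, ∅, heY.1, by simp⟩⟩, ?_⟩, ⟨⟨∅, heX.2, heY.2⟩, ?_⟩, ?_⟩
  · rintro V ⟨V₁, hV₁, V₂, hV₂, rfl, hdisj⟩ V' hV'
    refine ⟨V' ∩ V₁, hX1.2 _ hV₁ _ inter_subset_right,
            V' ∩ V₂, hY1.2 _ hV₂ _ inter_subset_right, ?_, ?_⟩
    · rw [← Set.inter_union_distrib_left]
      exact (Set.inter_eq_left.mpr hV').symm
    · rw [Set.inter_inter_inter_comm, Set.inter_self, hdisj, Set.inter_empty]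
  · rintro V ⟨h1, h2⟩ V' hV'
    exact ⟨hX2.2 _ h1 _ hV', hY2.2 _ h2 _ hV'⟩
  · ext V
    constructor
    · rintro ⟨⟨V₁, hV₁, V₂, hV₂, rfl, hdisj⟩, h1, h2⟩
      have e1 : V₁ = ∅ := by
        have : V₁ ∈ X.1 ∩ X.2 := ⟨hV₁, hX2.2 _ h1 _ Set.subset_union_left⟩
        rwa [hXi] at this
      have e2 : V₂ = ∅ := by
        have : V₂ ∈ Y.1 ∩ Y.2 := ⟨hV₂, hY2.2 _ h2 _ Set.subset_union_right⟩
        rwa [hYi] at this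
      simp only [e1, e2, Set.union_empty, Set.mem_singleton_iff]
    · rintro rfl
      exact ⟨⟨∅, heX.1, ∅, heY.1, by simp⟩, heX.2, heY.2⟩

lemma ds_nsum {α : Type*} {X : DPair α} (hX : DoubleSuit X) (n : ℕ) :
    DoubleSuit (nsum X n) := by
  induction n with
  | zero => exact hX
  | succ k ih => exact ds_plusE hX ih

theorem stmt16 {N A : Type*} (R : DPair (N → A) → DPair (N → A) → Prop)
    (hEq : Equivalence R)
    (hRplus : ∀ X Y X' Y' : DPair (N → A), DoubleSuit X → DoubleSuit Y →
      DoubleSuit X' → DoubleSuit Y' →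
      R X X' → R Y Y' → R (plusE X Y) (plusE X' Y'))
    (htot : ∀ X : DPair (N → A), DoubleSuit X → R X dsOne → X ≠ dsOne →
      ∀ Z W : DPair (N → A), DoubleSuit Z → DoubleSuit W → R Z W)
    (X Y : DPair (N → A)) (hX : DoubleSuit X) (hY : DoubleSuit Y)
    (hR : R X Y) (hord : ordOf X < ordOf Y) :
    ∀ Z W : DPair (N → A), DoubleSuit Z → DoubleSuit W → R Z W := by
  -- find n with nsum X n = dsOne attaining ordOf X
  have hlt : ordOf X < ⊤ := lt_of_lt_of_le hord le_top
  have hne : {m : ℕ∞ | ∃ n : ℕ, m = (n : ℕ∞) + 1 ∧ nsum X n = dsOne}.Nonempty := by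
    by_contra h
    rw [Set.not_nonempty_iff_eq_empty] at h
    simp [ordOf, h] at hlt
  obtain ⟨n, hn, hXn⟩ := csInf_mem hne
  have hYn : nsum Y n ≠ dsOne := by
    intro h
    have : ordOf Y ≤ (n : ℕ∞) + 1 := csInf_le (OrderBot.bddBelow _) ⟨n, rfl, h⟩
    rw [ordOf, hn] at hord
    exact absurd hord (not_lt.mpr this)
  have hRn : ∀ m : ℕ, R (nsum X m) (nsum Y m) := by
    intro m
    induction m with
    | zero => exact hR
    | succ k ih => exact hRplus _ _ _ _ hX (ds_nsum hX k) hY (ds_nsum hY k) hR ih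
  have : R (nsum Y n) dsOne := hEq.symm (hXn ▸ hRn n)
  exact htot (nsum Y n) (ds_nsum hY n) this hYn
end
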